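/- Let B_p ∈ (0, 2), γ_min ∈ (0, 1), and set h = (γ_min B_p − 2 − B_p)/(B_p − 2 − γ_min B_p); assume 0 < h < 2. Let θ₀ ∈ (0, π/2) with (h/(2 − h))·sin θ₀ < 1, let x_t ∈ ℝ, and let (x_k, z_k) ∈ ℝ² with z_k > 0 and x_k < x_t, and set θ_k = arctan((x_t − x_k)/z_k). Assume θ_k > θ₀, and define f(x) = (1/B_p)·[(2 + B_p)/(1 + x) − (2 − B_p)·x/(1 + x)] and α_b = tan(arcsin((h/(2 − h))·sin θ₀)). Then f( 2 sin θ_k/(sin θ₀ + sin θ_k) ) ≥ γ_min if and only if (x_t − x_k) − z_k·α_b ≤ 0. -/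

import Mathlib

open Real

/-- Case (b) of Proposition 2: for `θ_k > θ₀`, the baseline-decorrelation
constraint is equivalent to the linear constraint `(x_t − x_k) − z_k α_b ≤ 0`. -/
theorem prop2_case_b (Bp γmin h θ0 xt xk zk θk αb : ℝ)
    (hBp : 0 < Bp ∧ Bp < 2) (hγmin : 0 < γmin ∧ γmin < 1)
    (hh : h = (γmin * Bp - 2 - Bp) / (Bp - 2 - γmin * Bp))
    (hh' : 0 < h ∧ h < 2)
    (hθ0 : 0 < θ0 ∧ θ0 < π / 2)
    (hsin : (h / (2 - h)) * Real.sin θ0 < 1)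
    (hzk : 0 < zk) (hxk : xk < xt)
    (hθk : θk = Real.arctan ((xt - xk) / zk))
    (hgt : θ0 < θk)
    (hαb : αb = Real.tan (Real.arcsin ((h / (2 - h)) * Real.sin θ0))) :
    (1 / Bp) * ((2 + Bp) / (1 + 2 * Real.sin θk / (Real.sin θ0 + Real.sin θk)) -
        (2 - Bp) * (2 * Real.sin θk / (Real.sin θ0 + Real.sin θk)) /
          (1 + 2 * Real.sin θk / (Real.sin θ0 + Real.sin θk))) ≥ γmin ↔
      (xt - xk) - zk * αb ≤ 0 := by
  obtain ⟨hBp0, hBp2⟩ := hBp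
  obtain ⟨hγ0, hγ1⟩ := hγmin
  obtain ⟨hh0, hh2⟩ := hh'
  obtain ⟨hθ00, hθ0h⟩ := hθ0
  have h2h : 0 < 2 - h := by linarith
  set s0 := Real.sin θ0 with hs0def
  set sk := Real.sin θk with hskdef
  have hθk2 : θk < π / 2 := hθk ▸ Real.arctan_lt_pi_div_two _
  have hθkpos : 0 < θk := lt_trans hθ00 hgt
  have hs0 : 0 < s0 := Real.sin_pos_of_pos_of_lt_pi hθ00 (by linarith [Real.pi_pos])
  have hsk : 0 < sk := Real.sin_pos_of_pos_of_lt_pi hθkpos (by linarith [Real.pi_pos])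
  have hD : 0 < 2 - Bp + γmin * Bp := by nlinarith
  have hA : 0 < 2 + Bp - γmin * Bp := by nlinarith
  have hhval : h = (2 + Bp - γmin * Bp) / (2 - Bp + γmin * Bp) := by
    rw [hh, div_eq_div_iff (by linarith) (by linarith)]; ring
  have hE : 0 < 2 - 3 * Bp + 3 * γmin * Bp := by
    rw [hhval, div_lt_iff₀ hD] at hh2; linarith
  have hkey2 : h * (2 - 3 * Bp + 3 * γmin * Bp) = (2 + Bp - γmin * Bp) * (2 - h) := by
    rw [hhval]; field_simp
    have hDne : (2 - Bp + Bp * γmin) ≠ 0 := by linarith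
    rw [div_eq_iff hDne, mul_assoc (2 + Bp - Bp * γmin), sub_mul (2:ℝ), div_mul_cancel₀ _ hDne]; ring
  have hc : h / (2 - h) = (2 + Bp - γmin * Bp) / (2 - 3 * Bp + 3 * γmin * Bp) :=
    (div_eq_div_iff (ne_of_gt h2h) (ne_of_gt hE)).mpr hkey2
  have hssum : 0 < s0 + sk := by linarith
  have hM : 0 < s0 + 3 * sk := by linarith
  have hLHSeq : (1 / Bp) * ((2 + Bp) / (1 + 2 * sk / (s0 + sk)) -
      (2 - Bp) * (2 * sk / (s0 + sk)) / (1 + 2 * sk / (s0 + sk))) =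
      ((2 + Bp) * s0 + (3 * Bp - 2) * sk) / (Bp * (s0 + 3 * sk)) := by
    have h1 : 1 + 2 * sk / (s0 + sk) = (s0 + 3 * sk) / (s0 + sk) := by
      field_simp; ring
    rw [h1]; field_simp; ring
  have left_iff : γmin ≤ ((2 + Bp) * s0 + (3 * Bp - 2) * sk) / (Bp * (s0 + 3 * sk)) ↔
      sk ≤ (h / (2 - h)) * s0 := by
    rw [le_div_iff₀ (by positivity), hc, div_mul_eq_mul_div, le_div_iff₀ hE]
    constructor <;> intro H <;> linarith
  set cs := (h / (2 - h)) * s0 with hcsdef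
  have hcs0 : 0 < cs := mul_pos (div_pos hh0 h2h) hs0
  have hφpos : 0 < Real.arcsin cs := Real.arcsin_pos.mpr hcs0
  have hφlt : Real.arcsin cs < π / 2 := by
    rw [Real.arcsin_lt_pi_div_two]; exact hsin
  have hsinφ : Real.sin (Real.arcsin cs) = cs :=
    Real.sin_arcsin (by linarith) (le_of_lt hsin)
  have htan : Real.tan θk = (xt - xk) / zk := by rw [hθk, Real.tan_arctan]
  have right_iff : (xt - xk) - zk * αb ≤ 0 ↔ sk ≤ cs := by
    rw [sub_nonpos, hαb, mul_comm, ← div_le_iff₀ hzk, ← htan]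
    have hmem1 : θk ∈ Set.Ioo (-(π / 2)) (π / 2) :=
      ⟨by linarith, hθk2⟩
    have hmem2 : Real.arcsin cs ∈ Set.Ioo (-(π / 2)) (π / 2) :=
      ⟨by linarith, hφlt⟩
    rw [Real.strictMonoOn_tan.le_iff_le hmem1 hmem2]
    have hmem1' : θk ∈ Set.Icc (-(π / 2)) (π / 2) := ⟨by linarith, le_of_lt hθk2⟩
    have hmem2' : Real.arcsin cs ∈ Set.Icc (-(π / 2)) (π / 2) :=
      ⟨by linarith, le_of_lt hφlt⟩
    rw [← Real.strictMonoOn_sin.le_iff_le hmem1' hmem2', hsinφ]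
  rw [ge_iff_le, hLHSeq, left_iff, right_iff]
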